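/- Let (Ω, P) be a probability space and let Y₁, …, Y_N (N ≥ 1) be independent, identically distributed random variables with values in the interval [0, 1]. Let p ∈ [0, 1] satisfy p ≥ E[Y₁]. Then P( (1/N) · Σ_{i=1}^N Y_i ≥ 3p ) ≤ e^{−pN}. -/

import Mathlib

open MeasureTheory ProbabilityTheory

lemma exp_le_one_add {y : ℝ} (hy : y ∈ Set.Icc (0:ℝ) 1) :
    Real.exp y ≤ 1 + (Real.exp 1 - 1) * y := by
  have h := convexOn_exp.2 (Set.mem_univ (0:ℝ)) (Set.mem_univ (1:ℝ))
    (by linarith [hy.2] : (0:ℝ) ≤ 1 - y) hy.1 (by ring)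
  simp only [smul_eq_mul, mul_zero, mul_one, zero_add, Real.exp_zero] at h
  linarith

/-- Let `(Ω, P)` be a probability space and `Y 1, …, Y N` (with `N ≥ 1`) independent,
identically distributed random variables with values in `[0, 1]`. Let `p ∈ [0, 1]`
satisfy `p ≥ E[Y 1]`. Then `P((1/N) ∑ Y i ≥ 3p) ≤ exp (-p * N)`. -/
theorem stmt_2 {Ω : Type*} [MeasurableSpace Ω] (P : Measure Ω) [IsProbabilityMeasure P]
    (N : ℕ) (hN : 1 ≤ N) (Y : Fin N → Ω → ℝ)
    (hmeas : ∀ i, Measurable (Y i))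
    (hindep : iIndepFun Y P)
    (hident : ∀ i, IdentDistrib (Y i) (Y ⟨0, hN⟩) P P)
    (hval : ∀ i ω, Y i ω ∈ Set.Icc (0 : ℝ) 1)
    (p : ℝ) (hp : p ∈ Set.Icc (0 : ℝ) 1) (hpE : P[Y ⟨0, hN⟩] ≤ p) :
    P {ω | 3 * p ≤ (1 / (N : ℝ)) * ∑ i, Y i ω} ≤ ENNReal.ofReal (Real.exp (-(p * N))) := by
  have hNpos : (0:ℝ) < N := by exact_mod_cast Nat.lt_of_lt_of_le Nat.zero_lt_one hN
  set S : Ω → ℝ := fun ω => ∑ i, Y i ω with hS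
  have hset : {ω | 3 * p ≤ (1 / (N : ℝ)) * ∑ i, Y i ω} = {ω | 3 * p * N ≤ S ω} := by
    ext ω
    simp only [Set.mem_setOf_eq, hS]
    rw [div_mul_eq_mul_div, one_mul, le_div_iff₀ hNpos]
  rw [hset]
  -- integrability facts
  have hint : ∀ i : Fin N, Integrable (fun ω => Real.exp (1 * Y i ω)) P := by
    intro i
    refine Integrable.mono' (integrable_const (Real.exp 1))
      (((hmeas i).const_mul 1).exp.aestronglyMeasurable) ?_
    filter_upwards with ω
    rw [Real.norm_eq_abs, abs_of_pos (Real.exp_pos _), one_mul, Real.exp_le_exp]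
    exact (hval i ω).2
  have hintY : ∀ i : Fin N, Integrable (Y i) P := by
    intro i
    refine Integrable.mono' (integrable_const (1:ℝ)) (hmeas i).aestronglyMeasurable ?_
    filter_upwards with ω
    rw [Real.norm_eq_abs, abs_of_nonneg (hval i ω).1]
    exact (hval i ω).2
  have hintS : Integrable (fun ω => Real.exp (1 * S ω)) P := by
    have : S = ∑ i, Y i := by ext ω; simp [hS]
    rw [this]
    exact ProbabilityTheory.iIndepFun.integrable_exp_mul_sum hindep hmeas
      (fun i _ => hint i)
  -- Chernoff bound
  have hcher := measure_ge_le_exp_mul_mgf (μ := P) (X := S) (3 * p * N)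
    (zero_le_one) hintS
  -- bound on each mgf
  have hmgf_i : ∀ i : Fin N, mgf (Y i) P 1 ≤ Real.exp ((Real.exp 1 - 1) * p) := by
    intro i
    have h1 : mgf (Y i) P 1 ≤ 1 + (Real.exp 1 - 1) * p := by
      have hb : mgf (Y i) P 1 ≤ ∫ ω, (1 + (Real.exp 1 - 1) * Y i ω) ∂P := by
        refine integral_mono (by simpa using hint i)
          ((integrable_const 1).add ((hintY i).const_mul _)) ?_
        intro ω
        simpa using exp_le_one_add (hval i ω)
      have hE : ∫ ω, (1 + (Real.exp 1 - 1) * Y i ω) ∂P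
          = 1 + (Real.exp 1 - 1) * ∫ ω, Y i ω ∂P := by
        rw [integral_add (integrable_const 1) ((hintY i).const_mul _),
          integral_const, integral_const_mul]
        simp
      have hEi : ∫ ω, Y i ω ∂P ≤ p := by
        rw [(hident i).integral_eq]; exact hpE
      have : (0:ℝ) ≤ Real.exp 1 - 1 := by
        have := Real.add_one_le_exp (1:ℝ); linarith
      nlinarith [hb, hE]
    refine h1.trans ?_
    have := Real.add_one_le_exp ((Real.exp 1 - 1) * p)
    linarith
  have hmgf_nonneg : ∀ i : Fin N, 0 ≤ mgf (Y i) P 1 := fun i => mgf_nonneg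
  have hmgfS : mgf S P 1 ≤ Real.exp ((Real.exp 1 - 1) * p * N) := by
    have : S = ∑ i, Y i := by ext ω; simp [hS]
    rw [this, hindep.mgf_sum hmeas]
    calc ∏ i, mgf (Y i) P 1 ≤ ∏ _i : Fin N, Real.exp ((Real.exp 1 - 1) * p) := by
          exact Finset.prod_le_prod (fun i _ => hmgf_nonneg i) (fun i _ => hmgf_i i)
      _ = Real.exp ((Real.exp 1 - 1) * p * N) := by
          rw [Finset.prod_const, ← Real.exp_nat_mul]
          congr 1; simp [Finset.card_univ]; ring
  have hfinal : (P {ω | 3 * p * N ≤ S ω}).toReal ≤ Real.exp (-(p * N)) := by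
    refine hcher.trans ?_
    calc Real.exp (-1 * (3 * p * N)) * mgf S P 1
        ≤ Real.exp (-1 * (3 * p * N)) * Real.exp ((Real.exp 1 - 1) * p * N) := by
          exact mul_le_mul_of_nonneg_left hmgfS (Real.exp_pos _).le
      _ = Real.exp ((Real.exp 1 - 4) * (p * N)) := by
          rw [← Real.exp_add]; ring_nf
      _ ≤ Real.exp (-(p * N)) := by
          apply Real.exp_le_exp.mpr
          have hpN : 0 ≤ p * N := mul_nonneg hp.1 hNpos.le
          have he : Real.exp 1 - 4 ≤ -1 := by
            have := Real.exp_one_lt_d9; linarith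
          nlinarith
  rw [← ENNReal.ofReal_toReal (measure_ne_top P _)]
  exact ENNReal.ofReal_le_ofReal hfinal
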